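/- arXiv:0912.1321 — 2 statements merged into one kernel-verified Lean document; each statement's English description precedes it below -/
import Mathlib

section
/- Let μ be the Gaussian measure on ℝ with mean α ∈ ℝ and variance β², where β > 0, let K > 0, let ρ ∈ {1, −1}, and set γ = (α + β² − ln K)/β. Then ∫_ℝ max(ρ(e^ω − K), 0) dμ(ω) = ρ·(e^{α + β²/2}·Φ(ργ) − K·Φ(ρ(γ − β))), where Φ is the standard normal cumulative distribution function. -/
open MeasureTheory Real ProbabilityTheory
open scoped NNReal ENNReal

/-- The standard normal cumulative distribution function
`Φ(x) = ∫_{−∞}^{x} (2π)^{−1/2} e^{−s²/2} ds`. -/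
noncomputable def stdNormalCDF (x : ℝ) : ℝ :=
  ∫ s in Set.Iic x, (Real.sqrt (2 * Real.pi))⁻¹ * Real.exp (-s ^ 2 / 2)

lemma stdNormalCDF_eq_gaussian (x : ℝ) :
    stdNormalCDF x = ∫ s in Set.Iic x, gaussianPDFReal 0 1 s := by
  unfold stdNormalCDF
  refine setIntegral_congr_fun measurableSet_Iic (fun s _ => ?_)
  simp [gaussianPDFReal]

lemma coe_toNNReal_sq {β : ℝ} (hβ : 0 < β) :
    (((β ^ 2).toNNReal : ℝ≥0) : ℝ) = β ^ 2 := Real.coe_toNNReal _ (sq_nonneg β)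

lemma integral_Iic_gaussianPDFReal {β : ℝ} (hβ : 0 < β) (m a : ℝ) :
    ∫ x in Set.Iic a, gaussianPDFReal m (β ^ 2).toNNReal x
      = stdNormalCDF ((a - m) / β) := by
  have hβ' := coe_toNNReal_sq hβ
  set g : ℝ → ℝ := Set.indicator (Set.Iic a) (gaussianPDFReal m (β ^ 2).toNNReal) with hg
  have key : ∀ s : ℝ, g (β * s + m)
      = β⁻¹ * Set.indicator (Set.Iic ((a - m) / β)) (gaussianPDFReal 0 1) s := by
    intro s
    have hmem : β * s + m ∈ Set.Iic a ↔ s ∈ Set.Iic ((a - m) / β) := by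
      rw [Set.mem_Iic, Set.mem_Iic, le_div_iff₀ hβ]
      constructor <;> intro h <;> nlinarith
    have hval : gaussianPDFReal m (β ^ 2).toNNReal (β * s + m)
        = β⁻¹ * gaussianPDFReal 0 1 s := by
      simp only [gaussianPDFReal, hβ', NNReal.coe_one, mul_one, sub_zero]
      have h1 : Real.sqrt (2 * π * β ^ 2) = Real.sqrt (2 * π) * β := by
        rw [Real.sqrt_mul (by positivity), Real.sqrt_sq hβ.le]
      have h2 : -(β * s + m - m) ^ 2 / (2 * β ^ 2) = -s ^ 2 / 2 := by
        field_simp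
        ring
      rw [h1, h2, mul_inv]
      ring
    by_cases h : s ∈ Set.Iic ((a - m) / β)
    · rw [hg, Set.indicator_of_mem (hmem.mpr h), Set.indicator_of_mem h, hval]
    · rw [hg, Set.indicator_of_notMem (fun hh => h (hmem.mp hh)),
        Set.indicator_of_notMem h, mul_zero]
  have step : ∫ s : ℝ, g (β * s + m) = β⁻¹ * ∫ x : ℝ, g x := by
    have h1 : ∫ s : ℝ, g (β * s + m) = ∫ s : ℝ, (fun t => g (t + m)) (β * s) := rfl
    rw [h1, Measure.integral_comp_mul_left (fun t => g (t + m)) β,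
      integral_add_right_eq_self g m, abs_of_pos (inv_pos.mpr hβ), smul_eq_mul]
  calc ∫ x in Set.Iic a, gaussianPDFReal m (β ^ 2).toNNReal x
      = ∫ x : ℝ, g x := (integral_indicator measurableSet_Iic).symm
    _ = β * ∫ s : ℝ, g (β * s + m) := by
        rw [step, ← mul_assoc, mul_inv_cancel₀ hβ.ne', one_mul]
    _ = β * ∫ s : ℝ, β⁻¹ * Set.indicator (Set.Iic ((a - m) / β)) (gaussianPDFReal 0 1) s := by
        congr 1
        exact integral_congr_ae (Filter.Eventually.of_forall key)
    _ = stdNormalCDF ((a - m) / β) := by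
        rw [integral_const_mul, ← mul_assoc, mul_inv_cancel₀ hβ.ne', one_mul,
          integral_indicator measurableSet_Iic, stdNormalCDF_eq_gaussian]

lemma integral_Ici_gaussianPDFReal {β : ℝ} (hβ : 0 < β) (m a : ℝ) :
    ∫ x in Set.Ici a, gaussianPDFReal m (β ^ 2).toNNReal x
      = stdNormalCDF ((m - a) / β) := by
  have hneg : ∀ x : ℝ, gaussianPDFReal m (β ^ 2).toNNReal (-x)
      = gaussianPDFReal (-m) (β ^ 2).toNNReal x := by
    intro x
    simp only [gaussianPDFReal]
    congr 2
    ring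
  have h := integral_comp_neg_Ioi a (fun y => gaussianPDFReal m (β ^ 2).toNNReal (-y))
  simp only [neg_neg] at h
  rw [integral_Ici_eq_integral_Ioi, h]
  have h2 : ∫ x in Set.Iic (-a), gaussianPDFReal m (β ^ 2).toNNReal (-x)
      = ∫ x in Set.Iic (-a), gaussianPDFReal (-m) (β ^ 2).toNNReal x :=
    setIntegral_congr_fun measurableSet_Iic (fun x _ => hneg x)
  rw [h2, integral_Iic_gaussianPDFReal hβ]
  congr 1
  ring

lemma pdf_mul_exp {β : ℝ} (hβ : 0 < β) (α x : ℝ) :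
    gaussianPDFReal α (β ^ 2).toNNReal x * Real.exp x
      = Real.exp (α + β ^ 2 / 2) * gaussianPDFReal (α + β ^ 2) (β ^ 2).toNNReal x := by
  have hβ' := coe_toNNReal_sq hβ
  simp only [gaussianPDFReal, hβ']
  have harg : -(x - α) ^ 2 / (2 * β ^ 2) + x
      = (α + β ^ 2 / 2) + -(x - (α + β ^ 2)) ^ 2 / (2 * β ^ 2) := by
    field_simp
    ring
  rw [mul_assoc, ← Real.exp_add, harg, Real.exp_add]
  ring

lemma integral_gaussianReal_eq {β : ℝ} (hβ : 0 < β) (α : ℝ) (f : ℝ → ℝ) :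
    ∫ ω, f ω ∂(gaussianReal α (β ^ 2).toNNReal)
      = ∫ x, gaussianPDFReal α (β ^ 2).toNNReal x * f x := by
  have hv : (β ^ 2).toNNReal ≠ 0 := by
    rw [ne_eq, Real.toNNReal_eq_zero, not_le]
    positivity
  rw [gaussianReal_of_var_ne_zero _ hv]
  have hd : gaussianPDF α (β ^ 2).toNNReal
      = fun x => (((gaussianPDFReal α (β ^ 2).toNNReal x).toNNReal : ℝ≥0) : ℝ≥0∞) := rfl
  rw [hd, integral_withDensity_eq_integral_smul
    ((measurable_gaussianPDFReal α (β ^ 2).toNNReal).real_toNNReal) f]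
  refine integral_congr_ae (Filter.Eventually.of_forall fun x => ?_)
  simp [NNReal.smul_def, Real.coe_toNNReal _ (gaussianPDFReal_nonneg _ _ _)]

/-- If `μ` is the Gaussian measure with mean `α` and variance `β²` (`β > 0`), `K > 0`,
`ρ ∈ {1, −1}` and `γ = (α + β² − ln K)/β`, then
`∫_ℝ max(ρ(e^ω − K), 0) dμ(ω) = ρ·(e^{α + β²/2}·Φ(ργ) − K·Φ(ρ(γ − β)))`. -/
theorem gaussian_integral_payoff (α β K ρ γ : ℝ) (hβ : 0 < β) (hK : 0 < K)
    (hρ : ρ = 1 ∨ ρ = -1) (hγ : γ = (α + β ^ 2 - Real.log K) / β) :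
    ∫ ω, max (ρ * (Real.exp ω - K)) 0 ∂(gaussianReal α (Real.toNNReal (β ^ 2)))
      = ρ * (Real.exp (α + β ^ 2 / 2) * stdNormalCDF (ρ * γ)
          - K * stdNormalCDF (ρ * (γ - β))) := by
  have hint1 : Integrable (fun x => gaussianPDFReal α (β ^ 2).toNNReal x * Real.exp x) := by
    have heq : (fun x => gaussianPDFReal α (β ^ 2).toNNReal x * Real.exp x)
        = fun x => Real.exp (α + β ^ 2 / 2) * gaussianPDFReal (α + β ^ 2) (β ^ 2).toNNReal x :=
      funext (pdf_mul_exp hβ α)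
    rw [heq]
    exact (integrable_gaussianPDFReal _ _).const_mul _
  have hint2 : Integrable (fun x => gaussianPDFReal α (β ^ 2).toNNReal x * K) :=
    (integrable_gaussianPDFReal _ _).mul_const _
  rw [integral_gaussianReal_eq hβ]
  rcases hρ with h1 | h1 <;> subst h1
  · simp only [one_mul]
    have hind : (fun x => gaussianPDFReal α (β ^ 2).toNNReal x * max (Real.exp x - K) 0)
        = Set.indicator (Set.Ici (Real.log K))
            (fun x => gaussianPDFReal α (β ^ 2).toNNReal x * Real.exp x
              - gaussianPDFReal α (β ^ 2).toNNReal x * K) := by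
      funext x
      by_cases hx : x ∈ Set.Ici (Real.log K)
      · rw [Set.indicator_of_mem hx]
        have hKx : K ≤ Real.exp x := by
          rw [← Real.exp_log hK]; exact Real.exp_le_exp.mpr hx
        rw [max_eq_left (by linarith)]
        ring
      · rw [Set.indicator_of_notMem hx]
        have hKx : Real.exp x < K := by
          rw [← Real.exp_log hK]
          exact Real.exp_lt_exp.mpr (not_le.mp hx)
        rw [max_eq_right (by linarith), mul_zero]
    rw [hind, integral_indicator measurableSet_Ici,
      integral_sub hint1.integrableOn hint2.integrableOn]
    have e1 : ∫ x in Set.Ici (Real.log K),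
        gaussianPDFReal α (β ^ 2).toNNReal x * Real.exp x
        = Real.exp (α + β ^ 2 / 2) * stdNormalCDF γ := by
      simp_rw [pdf_mul_exp hβ α]
      rw [integral_const_mul, integral_Ici_gaussianPDFReal hβ]
      congr 2
      rw [hγ]
    have e2 : ∫ x in Set.Ici (Real.log K), gaussianPDFReal α (β ^ 2).toNNReal x * K
        = K * stdNormalCDF (γ - β) := by
      rw [integral_mul_const, integral_Ici_gaussianPDFReal hβ, mul_comm]
      congr 2
      rw [hγ]
      field_simp
      ring
    rw [e1, e2]
  · have hind : (fun x => gaussianPDFReal α (β ^ 2).toNNReal x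
          * max (-1 * (Real.exp x - K)) 0)
        = Set.indicator (Set.Iic (Real.log K))
            (fun x => gaussianPDFReal α (β ^ 2).toNNReal x * K
              - gaussianPDFReal α (β ^ 2).toNNReal x * Real.exp x) := by
      funext x
      by_cases hx : x ∈ Set.Iic (Real.log K)
      · rw [Set.indicator_of_mem hx]
        have hKx : Real.exp x ≤ K := by
          rw [← Real.exp_log hK]; exact Real.exp_le_exp.mpr hx
        rw [show -1 * (Real.exp x - K) = K - Real.exp x by ring,
          max_eq_left (by linarith)]
        ring
      · rw [Set.indicator_of_notMem hx]
        have hKx : K < Real.exp x := by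
          rw [← Real.exp_log hK]
          exact Real.exp_lt_exp.mpr (not_le.mp hx)
        rw [show -1 * (Real.exp x - K) = K - Real.exp x by ring,
          max_eq_right (by linarith), mul_zero]
    rw [hind, integral_indicator measurableSet_Iic,
      integral_sub hint2.integrableOn hint1.integrableOn]
    have e1 : ∫ x in Set.Iic (Real.log K),
        gaussianPDFReal α (β ^ 2).toNNReal x * Real.exp x
        = Real.exp (α + β ^ 2 / 2) * stdNormalCDF (-1 * γ) := by
      simp_rw [pdf_mul_exp hβ α]
      rw [integral_const_mul, integral_Iic_gaussianPDFReal hβ]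
      congr 2
      rw [hγ]
      ring
    have e2 : ∫ x in Set.Iic (Real.log K), gaussianPDFReal α (β ^ 2).toNNReal x * K
        = K * stdNormalCDF (-1 * (γ - β)) := by
      rw [integral_mul_const, integral_Iic_gaussianPDFReal hβ, mul_comm]
      congr 2
      rw [hγ]
      field_simp
      ring
    rw [e1, e2]
    ring
end

section
/- Define F : ℝ → ℝ by F(h) = 1 − ∫₀¹ Φ(−h·(1−√(1−θ))/√θ) dθ + h·∫₀¹ (√(1−θ)/√θ)·φ(−h·(1−√(1−θ))/√θ) dθ, where Φ is the standard normal cumulative distribution function and φ the standard normal density. Then the equation F(h) = 0 has a unique real solution h*, and this solution satisfies h* < 0. -/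
open MeasureTheory Real

/-- The standard normal density `φ(x) = (2π)^{−1/2} e^{−x²/2}`. -/
noncomputable def stdNormalPDF (x : ℝ) : ℝ :=
  (Real.sqrt (2 * Real.pi))⁻¹ * Real.exp (-x ^ 2 / 2)

/-- `F(h) = 1 − ∫₀¹ Φ(−h(1−√(1−θ))/√θ) dθ
          + h·∫₀¹ (√(1−θ)/√θ)·φ(−h(1−√(1−θ))/√θ) dθ`. -/
noncomputable def Fh (h : ℝ) : ℝ :=
  1 - (∫ θ in (0:ℝ)..1, stdNormalCDF (-h * (1 - Real.sqrt (1 - θ)) / Real.sqrt θ))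
    + h * ∫ θ in (0:ℝ)..1,
        (Real.sqrt (1 - θ) / Real.sqrt θ) *
          stdNormalPDF (-h * (1 - Real.sqrt (1 - θ)) / Real.sqrt θ)

open Set



lemma pdf_pos (x : ℝ) : 0 < stdNormalPDF x := by
  apply mul_pos (inv_pos.2 (Real.sqrt_pos.2 (by positivity))) (exp_pos _)

lemma continuous_pdf : Continuous stdNormalPDF := by
  unfold stdNormalPDF; fun_prop

lemma pdf_eq (x : ℝ) : stdNormalPDF x = (Real.sqrt (2 * Real.pi))⁻¹ * Real.exp (-(1/2) * x ^ 2) := by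
  unfold stdNormalPDF; ring_nf

lemma integrable_pdf : Integrable stdNormalPDF := by
  have h := (integrable_exp_neg_mul_sq (by norm_num : (0:ℝ) < 1/2)).const_mul (Real.sqrt (2 * Real.pi))⁻¹
  apply h.congr
  exact Filter.Eventually.of_forall fun x => (pdf_eq x).symm

lemma integral_pdf : ∫ x, stdNormalPDF x = 1 := by
  have : ∫ x, stdNormalPDF x = (Real.sqrt (2 * Real.pi))⁻¹ * ∫ x : ℝ, Real.exp (-(1/2) * x ^ 2) := by
    rw [← integral_const_mul]; exact integral_congr_ae (Filter.Eventually.of_forall fun x => pdf_eq x)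
  rw [this, integral_gaussian, show π/(1/2) = 2*π by ring]
  exact inv_mul_cancel₀ (by positivity)

lemma cdf_eq (x : ℝ) : stdNormalCDF x = ∫ s in Set.Iic x, stdNormalPDF s := rfl

lemma cdf_sub_cdf (a b : ℝ) : stdNormalCDF b - stdNormalCDF a = ∫ s in a..b, stdNormalPDF s := by
  rw [cdf_eq, cdf_eq]
  exact intervalIntegral.integral_Iic_sub_Iic integrable_pdf.integrableOn integrable_pdf.integrableOn

lemma hasDerivAt_cdf (x : ℝ) : HasDerivAt stdNormalCDF (stdNormalPDF x) x := by
  have h : ∀ y, stdNormalCDF y = stdNormalCDF 0 + ∫ s in (0:ℝ)..y, stdNormalPDF s := by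
    intro y; rw [← cdf_sub_cdf]; ring
  have hd : HasDerivAt (fun y => stdNormalCDF 0 + ∫ s in (0:ℝ)..y, stdNormalPDF s)
      (stdNormalPDF x) x := by
    apply HasDerivAt.const_add
    exact intervalIntegral.integral_hasDerivAt_right
      (continuous_pdf.intervalIntegrable _ _)
      (continuous_pdf.stronglyMeasurable.stronglyMeasurableAtFilter)
      continuous_pdf.continuousAt
  exact hd.congr_of_eventuallyEq (Filter.Eventually.of_forall h)

lemma continuous_cdf : Continuous stdNormalCDF := by
  have : Differentiable ℝ stdNormalCDF := fun x => (hasDerivAt_cdf x).differentiableAt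
  exact this.continuous

lemma cdf_strictMono : StrictMono stdNormalCDF := by
  intro a b hab
  have : 0 < stdNormalCDF b - stdNormalCDF a := by
    rw [cdf_sub_cdf]
    exact intervalIntegral.intervalIntegral_pos_of_pos (continuous_pdf.intervalIntegrable _ _) pdf_pos hab
  linarith

lemma cdf_add_cdf_neg (x : ℝ) : stdNormalCDF x + stdNormalCDF (-x) = 1 := by
  have h1 : stdNormalCDF (-x) = ∫ s in Ioi x, stdNormalPDF s := by
    rw [cdf_eq]
    rw [show ∫ s in Iic (-x), stdNormalPDF s = ∫ s in Iic (-x), stdNormalPDF (-s) by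
      apply setIntegral_congr_fun measurableSet_Iic
      intro s _; unfold stdNormalPDF; ring_nf]
    rw [integral_comp_neg_Iic, neg_neg]
  rw [cdf_eq, h1, intervalIntegral.integral_Iic_add_Ioi integrable_pdf.integrableOn integrable_pdf.integrableOn]
  exact integral_pdf

lemma cdf_zero : stdNormalCDF 0 = 1/2 := by
  have := cdf_add_cdf_neg 0
  rw [neg_zero] at this; linarith

lemma cdf_nonneg (x : ℝ) : 0 ≤ stdNormalCDF x := by
  rw [cdf_eq]
  exact setIntegral_nonneg measurableSet_Iic fun s _ => (pdf_pos s).le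

lemma cdf_le_one (x : ℝ) : stdNormalCDF x ≤ 1 := by
  have h := cdf_add_cdf_neg x
  have := cdf_nonneg (-x); linarith

lemma integral_exp_two_mul_Iic (c : ℝ) : ∫ s in Iic c, Real.exp (2*s) = Real.exp (2*c) / 2 := by
  have : ∀ x : ℝ, HasDerivAt (fun s => Real.exp (2*s) / 2) (Real.exp (2*x)) x := by
    intro x
    have := ((hasDerivAt_id x).const_mul 2).exp
    simpa using this.div_const 2
  have hint : IntegrableOn (fun s => Real.exp (2*s)) (Iic c) := by
    apply Integrable.mono' ((integrableOn_exp_Iic c).const_mul (Real.exp c))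
    · exact (Real.continuous_exp.comp (continuous_const.mul continuous_id)).aestronglyMeasurable
    · filter_upwards [ae_restrict_mem measurableSet_Iic] with s hs
      rw [Real.norm_of_nonneg (Real.exp_pos _).le, ← Real.exp_add]
      exact Real.exp_le_exp.2 (by simp at hs; linarith)
  have htend : Filter.Tendsto (fun s => Real.exp (2*s) / 2) Filter.atBot (nhds 0) := by
    rw [show (0:ℝ) = 0 / 2 by norm_num]
    apply Filter.Tendsto.div_const
    apply Real.tendsto_exp_atBot.comp
    exact Filter.tendsto_id.const_mul_atBot (by norm_num : (0:ℝ) < 2)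
  have := integral_Iic_of_hasDerivAt_of_tendsto
    ((this c).continuousAt.continuousWithinAt) (fun x _ => this x) hint htend
  rw [this]; ring

lemma exp_two_ge : (7:ℝ) ≤ Real.exp 2 := by
  have h := Real.exp_one_gt_d9
  have : Real.exp 2 = Real.exp 1 * Real.exp 1 := by rw [← Real.exp_add]; norm_num
  nlinarith [Real.exp_pos 1]

lemma sqrt_two_pi_ge : (5/2:ℝ) ≤ Real.sqrt (2 * Real.pi) := by
  rw [show (5/2:ℝ) = Real.sqrt ((5/2)^2) by rw [Real.sqrt_sq]; norm_num]
  apply Real.sqrt_le_sqrt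
  nlinarith [Real.pi_gt_d6]

lemma cdf_neg_two_le : stdNormalCDF (-2) ≤ 1/30 := by
  have key : stdNormalCDF (-2) ≤ (Real.sqrt (2 * Real.pi))⁻¹ * (Real.exp 2 * (Real.exp (2*(-2))/2)) := by
    rw [cdf_eq, ← integral_exp_two_mul_Iic (-2), ← integral_const_mul, ← integral_const_mul]
    apply setIntegral_mono_on integrable_pdf.integrableOn
    · apply Integrable.const_mul; apply Integrable.const_mul
      apply Integrable.mono' ((integrableOn_exp_Iic (-2)).const_mul (Real.exp (-2)))
      · exact (Real.continuous_exp.comp (continuous_const.mul continuous_id)).aestronglyMeasurable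
      · filter_upwards [ae_restrict_mem measurableSet_Iic] with s hs
        rw [Real.norm_of_nonneg (Real.exp_pos _).le, ← Real.exp_add]
        exact Real.exp_le_exp.2 (by simp at hs; linarith)
    · exact measurableSet_Iic
    · intro s hs
      unfold stdNormalPDF
      rw [← Real.exp_add]
      apply mul_le_mul_of_nonneg_left _ (by positivity)
      apply Real.exp_le_exp.2
      nlinarith [sq_nonneg (s+2)]
  have h1 : (Real.sqrt (2 * Real.pi))⁻¹ ≤ (5/2:ℝ)⁻¹ := by
    apply inv_anti₀ (by norm_num) sqrt_two_pi_ge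
  have h2 : Real.exp 2 * (Real.exp (2*(-2))/2) = Real.exp (-2) / 2 := by
    rw [div_eq_mul_inv, ← mul_assoc, ← Real.exp_add, div_eq_mul_inv]; norm_num
  have h3 : Real.exp (-2) ≤ 1/7 := by
    rw [Real.exp_neg]
    exact inv_le_of_inv_le₀ (by norm_num) (by simpa using exp_two_ge)
  have h4 : (0:ℝ) < Real.sqrt (2*Real.pi) := by positivity
  calc stdNormalCDF (-2) ≤ (Real.sqrt (2 * Real.pi))⁻¹ * (Real.exp (-2)/2) := by rw [← h2]; exact key
    _ ≤ (5/2:ℝ)⁻¹ * ((1/7)/2) := by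
        apply mul_le_mul h1 (by linarith) (by positivity) (by norm_num)
    _ ≤ 1/30 := by norm_num

/-- kernel `k(t) = 48 t (1-t²)/(1+t²)⁴` -/
noncomputable def kker (t : ℝ) : ℝ := 48 * t * (1 - t^2) / (1 + t^2)^4
/-- `v(t) = 4(1-t²)²/(1+t²)³` -/
noncomputable def vv (t : ℝ) : ℝ := 4 * (1 - t^2)^2 / (1 + t^2)^3
/-- `v'(t)` -/
noncomputable def vv' (t : ℝ) : ℝ := 8 * t * (1 - t^2) * (t^2 - 5) / (1 + t^2)^4
/-- `w(t) = 8 t (1-t²)/(1+t²)³` -/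
noncomputable def ww (t : ℝ) : ℝ := 8 * t * (1 - t^2) / (1 + t^2)^3
/-- antiderivative of `k` -/
noncomputable def KK (t : ℝ) : ℝ := -16/(1+t^2)^3 + 12/(1+t^2)^2
/-- substitution `ψ(t) = 4t²/(1+t²)²` -/
noncomputable def psi (t : ℝ) : ℝ := 4*t^2/(1+t^2)^2

lemma one_add_sq_ne (t : ℝ) : (1 + t^2) ≠ 0 := by positivity

lemma hasDerivAt_KK (t : ℝ) : HasDerivAt KK (kker t) t := by
  have h1 : HasDerivAt (fun t : ℝ => 1 + t^2) (2*t) t := by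
    simpa using (hasDerivAt_pow 2 t).const_add 1
  have h3 := (h1.pow 3)
  have h2 := (h1.pow 2)
  have d1 := ((hasDerivAt_const t (-16:ℝ)).div h3 (pow_ne_zero 3 (one_add_sq_ne t)))
  have d2 := ((hasDerivAt_const t (12:ℝ)).div h2 (pow_ne_zero 2 (one_add_sq_ne t)))
  have := d1.add d2
  refine this.congr_deriv ?_
  simp only [Pi.pow_apply]
  have h := one_add_sq_ne t
  unfold kker
  field_simp
  ring

lemma hasDerivAt_vv (t : ℝ) : HasDerivAt vv (vv' t) t := by
  have h1 : HasDerivAt (fun t : ℝ => 1 + t^2) (2*t) t := by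
    simpa using (hasDerivAt_pow 2 t).const_add 1
  have hn : HasDerivAt (fun t : ℝ => 4 * (1 - t^2)^2) (4 * (2 * (1 - t^2) * (-(2*t)))) t := by
    have hb : HasDerivAt (fun t : ℝ => 1 - t^2) (-(2*t)) t := by
      simpa using (hasDerivAt_pow 2 t).const_sub 1
    have := (hb.pow 2).const_mul (4:ℝ)
    refine this.congr_deriv ?_; ring
  have := hn.div (h1.pow 3) (pow_ne_zero 3 (one_add_sq_ne t))
  refine this.congr_deriv ?_
  simp only [Pi.pow_apply]
  have h := one_add_sq_ne t
  unfold vv'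
  field_simp
  ring

lemma hasDerivAt_psi (t : ℝ) : HasDerivAt psi (ww t) t := by
  have h1 : HasDerivAt (fun t : ℝ => 1 + t^2) (2*t) t := by
    simpa using (hasDerivAt_pow 2 t).const_add 1
  have hn : HasDerivAt (fun t : ℝ => 4 * t^2) (4 * (2*t)) t := by
    simpa using (hasDerivAt_pow 2 t).const_mul (4:ℝ)
  have := hn.div (h1.pow 2) (pow_ne_zero 2 (one_add_sq_ne t))
  refine this.congr_deriv ?_
  simp only [Pi.pow_apply]
  have h := one_add_sq_ne t
  unfold ww
  field_simp
  ring

lemma vv'_sub_ww (t : ℝ) : vv' t - ww t = -kker t := by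
  unfold vv' ww kker
  have h := one_add_sq_ne t
  field_simp
  ring

lemma continuous_kker : Continuous kker := by
  unfold kker; fun_prop (disch := intro t; positivity)

lemma continuous_vv : Continuous vv := by
  unfold vv; fun_prop (disch := intro t; positivity)

lemma continuous_vv' : Continuous vv' := by
  unfold vv'; fun_prop (disch := intro t; positivity)

lemma continuous_ww : Continuous ww := by
  unfold ww; fun_prop (disch := intro t; positivity)

lemma kker_nonneg {t : ℝ} (h0 : 0 ≤ t) (h1 : t ≤ 1) : 0 ≤ kker t := by
  unfold kker
  have : 0 ≤ 1 - t^2 := by nlinarith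
  positivity

lemma kker_pos_half : 0 < kker (1/2) := by unfold kker; norm_num

lemma integral_kker_01 : ∫ t in (0:ℝ)..1, kker t = 5 := by
  rw [intervalIntegral.integral_eq_sub_of_hasDerivAt (fun t _ => hasDerivAt_KK t)
    (continuous_kker.intervalIntegrable _ _)]
  unfold KK; norm_num

lemma integral_kker_0h : ∫ t in (0:ℝ)..(1/2), kker t = 436/125 := by
  rw [intervalIntegral.integral_eq_sub_of_hasDerivAt (fun t _ => hasDerivAt_KK t)
    (continuous_kker.intervalIntegrable _ _)]
  unfold KK; norm_num
lemma ww_pos {t : ℝ} (h0 : 0 < t) (h1 : t < 1) : 0 < ww t := by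
  unfold ww
  have : 0 < 1 - t^2 := by nlinarith
  positivity

lemma continuous_psi : Continuous psi := by
  unfold psi; fun_prop (disch := intro t; positivity)

lemma psi_zero : psi 0 = 0 := by unfold psi; norm_num
lemma psi_one : psi 1 = 1 := by unfold psi; norm_num

lemma strictMonoOn_psi : StrictMonoOn psi (Icc 0 1) := by
  apply strictMonoOn_of_deriv_pos (convex_Icc 0 1) continuous_psi.continuousOn
  intro x hx
  rw [interior_Icc] at hx
  rw [(hasDerivAt_psi x).deriv]
  exact ww_pos hx.1 hx.2

lemma psi_image : psi '' (Ioo 0 1) = Ioo 0 1 := by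
  apply Subset.antisymm
  · rintro _ ⟨t, ht, rfl⟩
    constructor
    · have := strictMonoOn_psi (left_mem_Icc.2 zero_le_one) ⟨ht.1.le, ht.2.le⟩ ht.1
      rwa [psi_zero] at this
    · have := strictMonoOn_psi ⟨ht.1.le, ht.2.le⟩ (right_mem_Icc.2 zero_le_one) ht.2
      rwa [psi_one] at this
  · have := intermediate_value_Ioo (zero_le_one) continuous_psi.continuousOn (a := (0:ℝ)) (b := 1)
    rwa [psi_zero, psi_one] at this

lemma change_of_var (g : ℝ → ℝ) :
    ∫ θ in (0:ℝ)..1, g θ = ∫ t in (0:ℝ)..1, ww t * g (psi t) := by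
  have key : ∫ θ in Ioo (0:ℝ) 1, g θ = ∫ t in Ioo (0:ℝ) 1, |ww t| • g (psi t) := by
    conv_lhs => rw [← psi_image]
    exact integral_image_eq_integral_abs_deriv_smul measurableSet_Ioo
      (fun x _ => (hasDerivAt_psi x).hasDerivWithinAt)
      (strictMonoOn_psi.injOn.mono Ioo_subset_Icc_self) g
  rw [intervalIntegral.integral_of_le zero_le_one, intervalIntegral.integral_of_le zero_le_one,
    integral_Ioc_eq_integral_Ioo, integral_Ioc_eq_integral_Ioo, key]
  apply setIntegral_congr_fun measurableSet_Ioo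
  intro t ht
  simp only [smul_eq_mul, abs_of_pos (ww_pos ht.1 ht.2)]

lemma sqrt_psi {t : ℝ} (h0 : 0 ≤ t) : Real.sqrt (psi t) = 2*t/(1+t^2) := by
  unfold psi
  rw [show 4*t^2/(1+t^2)^2 = (2*t/(1+t^2))^2 by field_simp [one_add_sq_ne t]; ring]
  exact Real.sqrt_sq (by positivity)

lemma sqrt_one_sub_psi {t : ℝ} (h0 : 0 ≤ t) (h1 : t ≤ 1) :
    Real.sqrt (1 - psi t) = (1-t^2)/(1+t^2) := by
  unfold psi
  rw [show 1 - 4*t^2/(1+t^2)^2 = ((1-t^2)/(1+t^2))^2 by field_simp; ring]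
  apply Real.sqrt_sq
  have : 0 ≤ 1 - t^2 := by nlinarith
  positivity

lemma ww_zero : ww 0 = 0 := by unfold ww; norm_num
lemma ww_one : ww 1 = 0 := by unfold ww; norm_num
lemma vv_one : vv 1 = 0 := by unfold vv; norm_num
lemma vv_zero : vv 0 = 4 := by unfold vv; norm_num

lemma arg_eq {h t : ℝ} (h0 : 0 < t) (h1 : t < 1) :
    -h * (1 - Real.sqrt (1 - psi t)) / Real.sqrt (psi t) = -h * t := by
  rw [sqrt_psi h0.le, sqrt_one_sub_psi h0.le h1.le]
  have h2 := one_add_sq_ne t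
  field_simp
  ring

lemma subst_cdf (h : ℝ) :
    ∫ θ in (0:ℝ)..1, stdNormalCDF (-h * (1 - Real.sqrt (1 - θ)) / Real.sqrt θ)
      = ∫ t in (0:ℝ)..1, ww t * stdNormalCDF (-h * t) := by
  rw [change_of_var]
  rw [intervalIntegral.integral_of_le zero_le_one, intervalIntegral.integral_of_le zero_le_one,
    integral_Ioc_eq_integral_Ioo, integral_Ioc_eq_integral_Ioo]
  apply setIntegral_congr_fun measurableSet_Ioo
  intro t ht
  simp only
  rw [arg_eq ht.1 ht.2]

lemma subst_pdf (h : ℝ) :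
    ∫ θ in (0:ℝ)..1, (Real.sqrt (1 - θ) / Real.sqrt θ) *
        stdNormalPDF (-h * (1 - Real.sqrt (1 - θ)) / Real.sqrt θ)
      = ∫ t in (0:ℝ)..1, vv t * stdNormalPDF (-h * t) := by
  rw [change_of_var]
  rw [intervalIntegral.integral_of_le zero_le_one, intervalIntegral.integral_of_le zero_le_one,
    integral_Ioc_eq_integral_Ioo, integral_Ioc_eq_integral_Ioo]
  apply setIntegral_congr_fun measurableSet_Ioo
  intro t ht
  obtain ⟨h0, h1⟩ := ht
  simp only
  rw [arg_eq h0 h1, sqrt_psi h0.le, sqrt_one_sub_psi h0.le h1.le]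
  unfold ww vv
  have h2 := one_add_sq_ne t
  have h3 : (2:ℝ) * t ≠ 0 := by positivity
  field_simp
  ring

lemma continuous_cdf_comp (h : ℝ) : Continuous (fun t : ℝ => stdNormalCDF (-h * t)) :=
  continuous_cdf.comp (continuous_const.mul continuous_id)

lemma continuous_pdf_comp (h : ℝ) : Continuous (fun t : ℝ => stdNormalPDF (-h * t)) :=
  continuous_pdf.comp (continuous_const.mul continuous_id)

lemma ibp (h : ℝ) :
    h * ∫ t in (0:ℝ)..1, vv t * stdNormalPDF (-h * t)
      = 2 + ∫ t in (0:ℝ)..1, vv' t * stdNormalCDF (-h * t) := by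
  have hu : ∀ x ∈ uIcc (0:ℝ) 1, HasDerivAt vv (vv' x) x := fun x _ => hasDerivAt_vv x
  have hv : ∀ x ∈ uIcc (0:ℝ) 1,
      HasDerivAt (fun t => stdNormalCDF (-h * t)) (-h * stdNormalPDF (-h * x)) x := by
    intro x _
    have h1 : HasDerivAt (fun t : ℝ => -h * t) (-h) x := by
      simpa using (hasDerivAt_id x).const_mul (-h)
    have h2 := (hasDerivAt_cdf (-h * x)).comp x h1
    have h3 : HasDerivAt (fun t => stdNormalCDF (-h * t)) (stdNormalPDF (-h * x) * (-h)) x := h2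
    convert h3 using 1
    ring
  have key := intervalIntegral.integral_mul_deriv_eq_deriv_mul hu hv
    (continuous_vv'.intervalIntegrable _ _)
    ((continuous_const.mul (continuous_pdf_comp h)).intervalIntegrable _ _)
  have lhs : ∫ x in (0:ℝ)..1, vv x * (-h * stdNormalPDF (-h * x))
      = -h * ∫ t in (0:ℝ)..1, vv t * stdNormalPDF (-h * t) := by
    rw [← intervalIntegral.integral_const_mul]
    apply intervalIntegral.integral_congr
    intro t _; ring
  rw [lhs] at key
  have rhs : ∫ x in (0:ℝ)..1, vv' x * stdNormalCDF (-h * x)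
      = ∫ t in (0:ℝ)..1, vv' t * stdNormalCDF (-h * t) := rfl
  rw [vv_one, vv_zero, mul_zero, zero_mul] at key
  rw [cdf_zero] at key
  linarith [key]

lemma Fh_eq (h : ℝ) : Fh h = 3 - ∫ t in (0:ℝ)..1, kker t * stdNormalCDF (-h * t) := by
  unfold Fh
  rw [subst_cdf, subst_pdf, ibp]
  have : (∫ t in (0:ℝ)..1, vv' t * stdNormalCDF (-h * t))
        - ∫ t in (0:ℝ)..1, ww t * stdNormalCDF (-h * t)
      = - ∫ t in (0:ℝ)..1, kker t * stdNormalCDF (-h * t) := by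
    rw [← intervalIntegral.integral_sub (f := fun t => vv' t * stdNormalCDF (-h * t))
      (g := fun t => ww t * stdNormalCDF (-h * t))
      ((continuous_vv'.mul (continuous_cdf_comp h)).intervalIntegrable _ _)
      ((continuous_ww.mul (continuous_cdf_comp h)).intervalIntegrable _ _),
      ← intervalIntegral.integral_neg]
    apply intervalIntegral.integral_congr
    intro t _
    simp only
    rw [show vv' t * stdNormalCDF (-h * t) - ww t * stdNormalCDF (-h * t)
        = (vv' t - ww t) * stdNormalCDF (-h * t) by ring, vv'_sub_ww]
    ring
  linarith [this]

lemma Fh_strictMono : StrictMono Fh := by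
  intro h1 h2 hlt
  rw [Fh_eq, Fh_eq]
  have key : ∫ t in (0:ℝ)..1, kker t * stdNormalCDF (-h2 * t)
      < ∫ t in (0:ℝ)..1, kker t * stdNormalCDF (-h1 * t) := by
    apply intervalIntegral.integral_lt_integral_of_continuousOn_of_le_of_exists_lt one_pos
      (continuous_kker.mul (continuous_cdf_comp h2)).continuousOn
      (continuous_kker.mul (continuous_cdf_comp h1)).continuousOn
    · intro x hx
      apply mul_le_mul_of_nonneg_left _ (kker_nonneg hx.1.le hx.2)
      exact (cdf_strictMono.monotone (by nlinarith [hx.1] : -h2 * x ≤ -h1 * x))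
    · refine ⟨1/2, ⟨by norm_num, by norm_num⟩, ?_⟩
      apply mul_lt_mul_of_pos_left _ kker_pos_half
      exact cdf_strictMono (by nlinarith)
  linarith

lemma Fh_zero_val : Fh 0 = 1/2 := by
  rw [Fh_eq]
  have : ∫ t in (0:ℝ)..1, kker t * stdNormalCDF (-0 * t)
      = ∫ t in (0:ℝ)..1, kker t * (1/2) := by
    apply intervalIntegral.integral_congr
    intro t _
    simp only
    norm_num [cdf_zero]
  rw [this, intervalIntegral.integral_mul_const, integral_kker_01]
  norm_num

lemma continuous_Fh : Continuous Fh := by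
  have : Continuous fun h : ℝ => ∫ t in (0:ℝ)..1, kker t * stdNormalCDF (-h * t) := by
    apply intervalIntegral.continuous_parametric_intervalIntegral_of_continuous'
    exact (continuous_kker.comp continuous_snd).mul
      (continuous_cdf.comp ((continuous_fst.neg).mul continuous_snd))
  have heq : ∀ h, Fh h = 3 - ∫ t in (0:ℝ)..1, kker t * stdNormalCDF (-h * t) := Fh_eq
  rw [show Fh = fun h => 3 - ∫ t in (0:ℝ)..1, kker t * stdNormalCDF (-h * t) from funext heq]
  exact continuous_const.sub this

lemma integral_kker_h1 : ∫ t in (1/2:ℝ)..1, kker t = 189/125 := by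
  rw [intervalIntegral.integral_eq_sub_of_hasDerivAt (fun t _ => hasDerivAt_KK t)
    (continuous_kker.intervalIntegrable _ _)]
  unfold KK; norm_num

lemma Fh_neg_at_neg_four : Fh (-4) < 0 := by
  rw [Fh_eq]
  have harg : ∀ t : ℝ, -(-4:ℝ) * t = 4 * t := by intro t; ring
  have hrw : ∫ t in (0:ℝ)..1, kker t * stdNormalCDF (-(-4) * t)
      = 5 - ∫ t in (0:ℝ)..1, kker t * stdNormalCDF (-4 * t) := by
    have : ∫ t in (0:ℝ)..1, kker t * stdNormalCDF (-(-4) * t)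
        = ∫ t in (0:ℝ)..1, (kker t - kker t * stdNormalCDF (-4 * t)) := by
      apply intervalIntegral.integral_congr
      intro t _
      simp only
      have := cdf_add_cdf_neg (4 * t)
      rw [harg t]
      have h4 : (-(4*t) : ℝ) = -4 * t := by ring
      rw [h4] at this
      linear_combination (kker t) * this
    rw [this, intervalIntegral.integral_sub (g := fun t => kker t * stdNormalCDF (-4 * t))
      (continuous_kker.intervalIntegrable _ _)
      ((continuous_kker.mul (continuous_cdf_comp (4:ℝ))).intervalIntegrable _ _),
      integral_kker_01]
  rw [hrw]
  have hsplit : ∫ t in (0:ℝ)..1, kker t * stdNormalCDF (-4 * t)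
      = (∫ t in (0:ℝ)..(1/2), kker t * stdNormalCDF (-4 * t))
        + ∫ t in (1/2:ℝ)..1, kker t * stdNormalCDF (-4 * t) := by
    rw [intervalIntegral.integral_add_adjacent_intervals] <;>
      exact ((continuous_kker.mul (continuous_cdf_comp (4:ℝ)))).intervalIntegrable _ _
  have hP1 : ∫ t in (0:ℝ)..(1/2), kker t * stdNormalCDF (-4 * t)
      ≤ ∫ t in (0:ℝ)..(1/2), kker t * (1/2) := by
    apply intervalIntegral.integral_mono_on (by norm_num)
      (((continuous_kker.mul (continuous_cdf_comp (4:ℝ)))).intervalIntegrable _ _)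
      ((continuous_kker.mul continuous_const).intervalIntegrable _ _)
    intro x hx
    apply mul_le_mul_of_nonneg_left _ (kker_nonneg hx.1 (by linarith [hx.2]))
    have : stdNormalCDF (-4 * x) ≤ stdNormalCDF 0 :=
      cdf_strictMono.monotone (by nlinarith [hx.1])
    rwa [cdf_zero] at this
  have hP2 : ∫ t in (1/2:ℝ)..1, kker t * stdNormalCDF (-4 * t)
      ≤ ∫ t in (1/2:ℝ)..1, kker t * (1/30) := by
    apply intervalIntegral.integral_mono_on (by norm_num)
      (((continuous_kker.mul (continuous_cdf_comp (4:ℝ)))).intervalIntegrable _ _)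
      ((continuous_kker.mul continuous_const).intervalIntegrable _ _)
    intro x hx
    apply mul_le_mul_of_nonneg_left _ (kker_nonneg (by linarith [hx.1]) hx.2)
    have h1 : stdNormalCDF (-4 * x) ≤ stdNormalCDF (-2) :=
      cdf_strictMono.monotone (by nlinarith [hx.1])
    linarith [cdf_neg_two_le]
  rw [intervalIntegral.integral_mul_const, integral_kker_0h] at hP1
  rw [intervalIntegral.integral_mul_const, integral_kker_h1] at hP2
  have hcs := hrw
  linarith [hP1, hP2, hsplit]



/-- The equation `F(h) = 0` has a unique real solution `h*`, and `h* < 0`. -/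
theorem Fh_unique_negative_root :
    (∃! h : ℝ, Fh h = 0) ∧ (∀ h : ℝ, Fh h = 0 → h < 0) := by
  have hroot : ∃ c ∈ Icc (-4:ℝ) 0, Fh c = 0 := by
    have := intermediate_value_Icc (by norm_num : (-4:ℝ) ≤ 0) continuous_Fh.continuousOn
    have hmem : (0:ℝ) ∈ Icc (Fh (-4)) (Fh 0) := by
      constructor
      · linarith [Fh_neg_at_neg_four]
      · rw [Fh_zero_val]; norm_num
    obtain ⟨c, hc, hfc⟩ := this hmem
    exact ⟨c, hc, hfc⟩
  obtain ⟨c, hc, hfc⟩ := hroot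
  constructor
  · exact ⟨c, hfc, fun y hy => Fh_strictMono.injective (by rw [hy, hfc])⟩
  · intro h hh
    by_contra hcontra
    push_neg at hcontra
    rcases eq_or_lt_of_le hcontra with h0 | h0
    · rw [← h0, Fh_zero_val] at hh; norm_num at hh
    · have := Fh_strictMono h0
      rw [hh, Fh_zero_val] at this
      norm_num at this
end
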